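/- Let H be a simply connected combinatorial strata structure endowed with a datum (N, {P_J}) of nodal strata, and let B be a nodal separating block of N in H. If γ and γ′ are two 1-paths in H joining the same strata {i} and {j}, then κ_B(γ) − κ_B(γ′) is even. In particular, A_B(i) ∩ B_B(i) = ∅ for every i ∈ I. -/

import Mathlib

/-- A combinatorial strata structure with minimal set of indices the (finite) type `I`:
an open subset of `𝒫(I)` (i.e. a family closed under taking subsets) containing all
singletons. -/
def IsCSS {I : Type*} (H : Set (Finset I)) : Prop :=
  (∀ J ∈ H, ∀ J' : Finset I, J' ⊆ J → J' ∈ H) ∧ ∀ i : I, ({i} : Finset I) ∈ H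

/-- `level H k` is `H(k)`, the set of strata of `H` with exactly `k` elements. -/
def level {I : Type*} (H : Set (Finset I)) (k : ℕ) : Set (Finset I) :=
  {J ∈ H | J.card = k}

/-- A `k`-path in `H`: a nonempty sequence of strata of `H(k)` such that the union of
any two consecutive entries lies in `H(k+1)`. -/
def IsKPath {I : Type*} [DecidableEq I] (H : Set (Finset I)) (k : ℕ)
    (γ : List (Finset I)) : Prop :=
  γ ≠ [] ∧ (∀ J ∈ γ, J ∈ level H k) ∧
    γ.Chain' fun J J' => (J ∪ J') ∈ level H (k + 1)

/-- The path `γ` joins `J` and `J'`. -/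
def Joins {I : Type*} (γ : List (Finset I)) (J J' : Finset I) : Prop :=
  γ.head? = some J ∧ γ.getLast? = some J'

/-- The subsupport of a path: the sequence of unions of consecutive entries. -/
def subSup {I : Type*} [DecidableEq I] (γ : List (Finset I)) : List (Finset I) :=
  List.zipWith (· ∪ ·) γ γ.tail

open Classical in
/-- `kappa B γ`: the number of entries of the subsupport of `γ` that belong to `B`. -/
noncomputable def kappa {I : Type*} [DecidableEq I] (B : Set (Finset I))
    (γ : List (Finset I)) : ℕ :=
  (subSup γ).countP fun J => decide (J ∈ B)

/-- `A` is `k`-connected in `H`: any two elements of `A` are joined by a `k`-path in `H`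
with support contained in `A`. -/
def KConnectedIn {I : Type*} [DecidableEq I] (H : Set (Finset I)) (k : ℕ)
    (A : Set (Finset I)) : Prop :=
  ∀ J ∈ A, ∀ J' ∈ A, ∃ γ : List (Finset I),
    IsKPath H k γ ∧ Joins γ J J' ∧ ∀ K ∈ γ, K ∈ A

/-- `C` is a `k`-connected component of `A` in `H`: a maximal nonempty `k`-connected
subset of `A`. -/
def IsKComponent {I : Type*} [DecidableEq I] (H : Set (Finset I)) (k : ℕ)
    (A C : Set (Finset I)) : Prop :=
  C.Nonempty ∧ C ⊆ A ∧ KConnectedIn H k C ∧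
    ∀ C' : Set (Finset I), C ⊆ C' → C' ⊆ A → KConnectedIn H k C' → C' = C

/-- `H` is 1-connected: `H(1)` is 1-connected in `H`. -/
def OneConnected {I : Type*} [DecidableEq I] (H : Set (Finset I)) : Prop :=
  KConnectedIn H 1 (level H 1)

/-- One-sided version of an elementary homotopic pair of 1-paths in `H`. -/
def ElemPairCore {I : Type*} [DecidableEq I] (H : Set (Finset I))
    (ε ε' : List (Finset I)) : Prop :=
  ε = ε'
  ∨ (∃ i₁ i₂ : I, ε = [{i₁}, {i₂}, {i₁}] ∧ ε' = [{i₁}])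
  ∨ (∃ i₁ i₂ i₃ : I, ε = [{i₁}, {i₂}] ∧ ε' = [{i₁}, {i₃}, {i₂}] ∧
      IsKPath H 2 [{i₁, i₃}, {i₃, i₂}])

/-- An elementary homotopic pair of 1-paths in `H` (up to swapping the two paths). -/
def ElemPair {I : Type*} [DecidableEq I] (H : Set (Finset I))
    (ε ε' : List (Finset I)) : Prop :=
  ElemPairCore H ε ε' ∨ ElemPairCore H ε' ε

/-- `γ₂` is obtained from `γ₁` by an elementary homotopy. -/
def ElemHomotopy {I : Type*} [DecidableEq I] (H : Set (Finset I))
    (γ₁ γ₂ : List (Finset I)) : Prop :=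
  ∃ δ ε₁ ε₂ ρ : List (Finset I),
    ElemPair H ε₁ ε₂ ∧ γ₁ = δ ++ ε₁ ++ ρ ∧ γ₂ = δ ++ ε₂ ++ ρ

/-- `γ` and `γ'` are homotopically equivalent in `H` with support in `A`: they are linked
by a finite chain of elementary homotopies in which every intermediate 1-path has
support in `A`. -/
def HomotopicIn {I : Type*} [DecidableEq I] (H A : Set (Finset I))
    (γ γ' : List (Finset I)) : Prop :=
  (IsKPath H 1 γ ∧ ∀ J ∈ γ, J ∈ A) ∧
    Relation.ReflTransGen
      (fun g₁ g₂ => ElemHomotopy H g₁ g₂ ∧ IsKPath H 1 g₂ ∧ ∀ J ∈ g₂, J ∈ A) γ γ'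

/-- A 1-connected subset `A ⊆ H(1)` is simply connected in `H`: any two 1-paths in `H`
with support in `A` joining the same strata are homotopically equivalent in `H` with
support in `A`. -/
def SimplyConnectedIn {I : Type*} [DecidableEq I] (H A : Set (Finset I)) : Prop :=
  KConnectedIn H 1 A ∧
    ∀ γ γ' : List (Finset I), IsKPath H 1 γ → IsKPath H 1 γ' →
      (∀ J ∈ γ, J ∈ A) → (∀ J ∈ γ', J ∈ A) →
      γ.head? = γ'.head? → γ.getLast? = γ'.getLast? →
      HomotopicIn H A γ γ'

/-- `H` is simply connected: `H(1)` is simply connected in `H`. -/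
def SimplyConnected {I : Type*} [DecidableEq I] (H : Set (Finset I)) : Prop :=
  SimplyConnectedIn H (level H 1)

/-- The closure of `A` in `H`: the strata of `H` containing some element of `A`. -/
def Cl {I : Type*} (H A : Set (Finset I)) : Set (Finset I) :=
  {J' ∈ H | ∃ J ∈ A, J ⊆ J'}

/-- A datum of nodal strata `(N, {P_J})` in `H`: a subset `N ⊆ H` together with, for each
`J ∈ N`, a partition `P_J = {J₊, J₋}` of `J` into two nonempty parts, such that for every
`J ∈ N` and `J' ⊆ J` one has `J' ∈ N` iff `J' ∩ J₊ ≠ ∅ ≠ J' ∩ J₋`, and in that case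
`P_{J'} = {J' ∩ J₊, J' ∩ J₋}`. -/
structure NodalDatum {I : Type*} [DecidableEq I] (H : Set (Finset I)) : Type _ where
  N : Set (Finset I)
  N_sub : N ⊆ H
  plus : Finset I → Finset I
  minus : Finset I → Finset I
  plus_nonempty : ∀ J ∈ N, (plus J).Nonempty
  minus_nonempty : ∀ J ∈ N, (minus J).Nonempty
  union_eq : ∀ J ∈ N, plus J ∪ minus J = J
  disj : ∀ J ∈ N, Disjoint (plus J) (minus J)
  mem_iff : ∀ J ∈ N, ∀ J' : Finset I, J' ⊆ J →
    (J' ∈ N ↔ (J' ∩ plus J).Nonempty ∧ (J' ∩ minus J).Nonempty)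
  part_eq : ∀ J ∈ N, ∀ J' : Finset I, J' ⊆ J → J' ∈ N →
    ({plus J', minus J'} : Set (Finset I)) = {J' ∩ plus J, J' ∩ minus J}

/-- `N*`: the set of uninterrupted nodal strata, i.e. `J ∈ N` with `Cl_H({J}) ⊆ N`. -/
def Nstar {I : Type*} [DecidableEq I] {H : Set (Finset I)} (D : NodalDatum H) :
    Set (Finset I) :=
  {J ∈ D.N | ∀ J' ∈ H, J ⊆ J' → J' ∈ D.N}

/-- A nodal block of `N` in `H`: a 2-connected component of `N(2) = N ∩ H(2)` in `H`. -/
def IsNodalBlock {I : Type*} [DecidableEq I] {H : Set (Finset I)} (D : NodalDatum H)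
    (B : Set (Finset I)) : Prop :=
  IsKComponent H 2 (D.N ∩ level H 2) B

/-- A nodal separating block: a nodal block contained in `N*`. -/
def IsSepBlock {I : Type*} [DecidableEq I] {H : Set (Finset I)} (D : NodalDatum H)
    (B : Set (Finset I)) : Prop :=
  IsNodalBlock D B ∧ B ⊆ Nstar D

/-- The separator set: the union of all nodal separating blocks. -/
def SepSet {I : Type*} [DecidableEq I] {H : Set (Finset I)} (D : NodalDatum H) :
    Set (Finset I) :=
  ⋃₀ {B | IsSepBlock D B}

/-- `A_B(i)`: the set of `{j} ∈ H(1)` joined to `{i}` by a 1-path `γ` in `H` with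
`κ_B(γ)` even. -/
def ABset {I : Type*} [DecidableEq I] (H B : Set (Finset I)) (i : I) : Set (Finset I) :=
  {J ∈ level H 1 | ∃ γ : List (Finset I),
    IsKPath H 1 γ ∧ Joins γ {i} J ∧ Even (kappa B γ)}

/-- `B_B(i)`: the set of `{j} ∈ H(1)` joined to `{i}` by a 1-path `γ` in `H` with
`κ_B(γ)` odd. -/
def BBset {I : Type*} [DecidableEq I] (H B : Set (Finset I)) (i : I) : Set (Finset I) :=
  {J ∈ level H 1 | ∃ γ : List (Finset I),
    IsKPath H 1 γ ∧ Joins γ {i} J ∧ Odd (kappa B γ)}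

section Aux
variable {I : Type*} [DecidableEq I]

open Classical in
lemma kappa_cons_cons (B : Set (Finset I)) (a b : Finset I) (l : List (Finset I)) :
    kappa B (a :: b :: l) = (if a ∪ b ∈ B then 1 else 0) + kappa B (b :: l) := by
  simp [kappa, subSup, List.countP_cons, decide_eq_true_eq]
  by_cases h : a ∪ b ∈ B <;> simp [h] <;> omega

lemma subSup_append (B : Set (Finset I)) :
    ∀ (xs : List (Finset I)) (L : Finset I), xs.getLast? = some L →
      ∀ (y : Finset I) (ys : List (Finset I)),
      subSup (xs ++ y :: ys) = subSup xs ++ (L ∪ y) :: subSup (y :: ys)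
  | [], L, h, y, ys => by simp at h
  | [a], L, h, y, ys => by
      simp at h
      subst h
      simp [subSup]
  | a :: b :: t, L, h, y, ys => by
      have h' : (b :: t).getLast? = some L := by
        rw [← h]; simp [List.getLast?]
      have ih := subSup_append B (b :: t) L h' y ys
      have e1 : subSup ((a :: b :: t) ++ y :: ys) =
          (a ∪ b) :: subSup ((b :: t) ++ y :: ys) := by simp [subSup]
      have e2 : subSup (a :: b :: t) = (a ∪ b) :: subSup (b :: t) := by simp [subSup]
      rw [e1, ih, e2]; simp

open Classical in
lemma kappa_append (B : Set (Finset I)) (xs : List (Finset I)) (L : Finset I)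
    (h : xs.getLast? = some L) (y : Finset I) (ys : List (Finset I)) :
    kappa B (xs ++ y :: ys) =
      kappa B xs + (if L ∪ y ∈ B then 1 else 0) + kappa B (y :: ys) := by
  rw [kappa, subSup_append B xs L h y ys]
  simp [kappa, List.countP_append, List.countP_cons, decide_eq_true_eq]
  by_cases hm : L ∪ y ∈ B <;> simp [hm] <;> omega

lemma kappa_replace (B : Set (Finset I)) (δ ε₁ ε₂ ρ : List (Finset I))
    (h₁ : ε₁ ≠ []) (h₂ : ε₂ ≠ [])
    (hh : ε₁.head? = ε₂.head?) (hl : ε₁.getLast? = ε₂.getLast?) :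
    kappa B (δ ++ ε₁ ++ ρ) + kappa B ε₂ = kappa B (δ ++ ε₂ ++ ρ) + kappa B ε₁ := by
  obtain ⟨L, hL⟩ : ∃ L, ε₁.getLast? = some L := by
    cases e : ε₁.getLast? with
    | none => exact absurd (List.getLast?_eq_none_iff.mp e) h₁
    | some L => exact ⟨L, rfl⟩
  have hL₂ : ε₂.getLast? = some L := by rw [← hl, hL]
  obtain ⟨a, hha⟩ : ∃ a, ε₁.head? = some a := by
    cases e : ε₁.head? with
    | none => exact absurd (List.head?_eq_none_iff.mp e) h₁
    | some a => exact ⟨a, rfl⟩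
  have hha₂ : ε₂.head? = some a := by rw [← hh, hha]
  -- reduce to the case ρ = []
  suffices hcore : kappa B (δ ++ ε₁) + kappa B ε₂ = kappa B (δ ++ ε₂) + kappa B ε₁ by
    cases ρ with
    | nil => simpa using hcore
    | cons r ρ' =>
        have g1 : (δ ++ ε₁).getLast? = some L := by
          rw [List.getLast?_append_of_ne_nil _ h₁]; exact hL
        have g2 : (δ ++ ε₂).getLast? = some L := by
          rw [List.getLast?_append_of_ne_nil _ h₂]; exact hL₂
        rw [List.append_assoc, List.append_assoc] at *
        rw [show δ ++ (ε₁ ++ r :: ρ') = (δ ++ ε₁) ++ r :: ρ' by simp,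
          show δ ++ (ε₂ ++ r :: ρ') = (δ ++ ε₂) ++ r :: ρ' by simp,
          kappa_append B _ L g1 r ρ', kappa_append B _ L g2 r ρ']
        omega
  -- the core case
  cases δ with
  | nil => simp; omega
  | cons d δ' =>
      obtain ⟨Ld, hLd⟩ : ∃ Ld, (d :: δ').getLast? = some Ld := by
        cases e : (d :: δ').getLast? with
        | none => exact absurd (List.getLast?_eq_none_iff.mp e) (by simp)
        | some Ld => exact ⟨Ld, rfl⟩
      obtain ⟨t₁, rfl⟩ : ∃ t₁, ε₁ = a :: t₁ := by
        cases ε₁ with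
        | nil => exact absurd rfl h₁
        | cons x t =>
            refine ⟨t, ?_⟩
            simp only [List.head?_cons, Option.some.injEq] at hha
            rw [hha]
      obtain ⟨t₂, rfl⟩ : ∃ t₂, ε₂ = a :: t₂ := by
        cases ε₂ with
        | nil => exact absurd rfl h₂
        | cons x t =>
            refine ⟨t, ?_⟩
            simp only [List.head?_cons, Option.some.injEq] at hha₂
            rw [hha₂]
      rw [kappa_append B (d :: δ') Ld hLd a t₁, kappa_append B (d :: δ') Ld hLd a t₂]
      omega
end Aux
section Aux2
variable {I : Type*} [DecidableEq I] {H : Set (Finset I)}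

/-- Absorption: a nodal block absorbs any adjacent element of `N(2)`. -/
lemma absorb {D : NodalDatum H} {B : Set (Finset I)} (hB : IsSepBlock D B)
    {e e' : Finset I} (he : e ∈ B) (he'N : e' ∈ D.N) (he'2 : e' ∈ level H 2)
    (hu : e ∪ e' ∈ level H 3) : e' ∈ B := by
  obtain ⟨⟨hne, hsub, hconn, hmax⟩, _⟩ := hB
  have hkey : insert e' B = B := by
    apply hmax
    · exact Set.subset_insert _ _
    · intro K hK
      rcases Set.mem_insert_iff.mp hK with rfl | hK
      · exact ⟨he'N, he'2⟩
      · exact hsub hK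
    · -- 2-connectedness of insert e' B
      have toB : ∀ K ∈ B, ∃ γ : List (Finset I), IsKPath H 2 γ ∧ Joins γ e' K ∧
          ∀ X ∈ γ, X ∈ insert e' B := by
        intro K hK
        obtain ⟨γ, ⟨hγne, hγlev, hγch⟩, ⟨hγh, hγl⟩, hγsup⟩ := hconn e he K hK
        refine ⟨e' :: γ, ⟨by simp, ?_, ?_⟩, ⟨rfl, ?_⟩, ?_⟩
        · intro X hX
          rcases List.mem_cons.mp hX with h | h
          · rw [h]; exact he'2
          · exact hγlev X h
        · rw [List.Chain', List.isChain_cons]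
          refine ⟨?_, hγch⟩
          intro b hb
          rw [hγh] at hb
          cases hb
          rwa [Finset.union_comm]
        · rw [List.getLast?_cons, hγl]
          cases γ with
          | nil => simp at hγne
          | cons x t => simp [List.getLast?_cons]
        · intro X hX
          rcases List.mem_cons.mp hX with h | h
          · rw [h]; exact Set.mem_insert _ _
          · exact Set.mem_insert_of_mem _ (hγsup X h)
      have fromB : ∀ K ∈ B, ∃ γ : List (Finset I), IsKPath H 2 γ ∧ Joins γ K e' ∧
          ∀ X ∈ γ, X ∈ insert e' B := by
        intro K hK
        obtain ⟨γ, ⟨hγne, hγlev, hγch⟩, ⟨hγh, hγl⟩, hγsup⟩ := hconn K hK e he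
        refine ⟨γ ++ [e'], ⟨by simp, ?_, ?_⟩, ⟨?_, ?_⟩, ?_⟩
        · intro X hX
          rcases List.mem_append.mp hX with h | h
          · exact hγlev X h
          · rw [List.mem_singleton.mp h]; exact he'2
        · rw [List.Chain', List.isChain_append]
          refine ⟨hγch, List.isChain_singleton _, ?_⟩
          intro x hx y hy
          rw [hγl] at hx
          cases hx
          simp only [List.head?_cons, Option.mem_def, Option.some.injEq] at hy
          rw [← hy]
          exact hu
        · rw [List.head?_append_of_ne_nil _ hγne, hγh]
        · exact List.getLast?_concat
        · intro X hX
          rcases List.mem_append.mp hX with h | h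
          · exact Set.mem_insert_of_mem _ (hγsup X h)
          · rw [List.mem_singleton.mp h]; exact Set.mem_insert _ _
      intro J hJ K hK
      rcases Set.mem_insert_iff.mp hJ with hJe | hJ
      · rcases Set.mem_insert_iff.mp hK with hKe | hK
        · refine ⟨[e'], ⟨by simp, by simpa using he'2, List.isChain_singleton _⟩,
            ⟨by simp [hJe], by simp [hKe]⟩, by simp⟩
        · obtain ⟨γ, h1, ⟨h2a, h2b⟩, h3⟩ := toB K hK
          exact ⟨γ, h1, ⟨by rw [h2a, hJe], h2b⟩, h3⟩
      · rcases Set.mem_insert_iff.mp hK with hKe | hK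
        · obtain ⟨γ, h1, ⟨h2a, h2b⟩, h3⟩ := fromB J hJ
          exact ⟨γ, h1, ⟨h2a, by rw [h2b, hKe]⟩, h3⟩
        · obtain ⟨γ, h1, h2, h3⟩ := hconn J hJ K hK
          exact ⟨γ, h1, h2, fun X hX => Set.mem_insert_of_mem _ (h3 X hX)⟩
  rw [← hkey]
  exact Set.mem_insert _ _

/-- In a nodal stratum of cardinality 3, there is an apex `a` such that the
2-element subsets in `N` are exactly those containing `a`. -/
lemma exists_apex (D : NodalDatum H) (T : Finset I) (hTN : T ∈ D.N)
    (hT3 : T.card = 3) :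
    ∃ a ∈ T, ∀ f : Finset I, f ⊆ T → f.card = 2 → (f ∈ D.N ↔ a ∈ f) := by
  have hPu := D.union_eq T hTN
  have hPd := D.disj T hTN
  have hP1 := D.plus_nonempty T hTN
  have hP2 := D.minus_nonempty T hTN
  have hmem := D.mem_iff T hTN
  have hcards : (D.plus T).card + (D.minus T).card = 3 := by
    rw [← Finset.card_union_of_disjoint hPd, hPu, hT3]
  have main : ∀ S P : Finset I, S ∪ P = T → Disjoint S P → S.card = 1 →
      (∀ f : Finset I, f ⊆ T →
        (f ∈ D.N ↔ (f ∩ S).Nonempty ∧ (f ∩ P).Nonempty)) →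
      ∃ a ∈ T, ∀ f : Finset I, f ⊆ T → f.card = 2 → (f ∈ D.N ↔ a ∈ f) := by
    intro S P hSP hd hS1 hiff
    obtain ⟨a, rfl⟩ := Finset.card_eq_one.mp hS1
    refine ⟨a, by rw [← hSP]; simp, ?_⟩
    intro f hfT hf2
    rw [hiff f hfT]
    constructor
    · rintro ⟨⟨x, hx⟩, -⟩
      simp only [Finset.mem_inter, Finset.mem_singleton] at hx
      rw [← hx.2]; exact hx.1
    · intro haf
      obtain ⟨b, hbf, hba⟩ : ∃ b ∈ f, b ≠ a := by
        by_contra hno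
        push_neg at hno
        have : f ⊆ {a} := fun x hx => Finset.mem_singleton.mpr (hno x hx)
        have := Finset.card_le_card this
        simp [hf2] at this
      refine ⟨⟨a, by simp [haf]⟩, ⟨b, ?_⟩⟩
      simp only [Finset.mem_inter]
      refine ⟨hbf, ?_⟩
      have hbT : b ∈ T := hfT hbf
      rw [← hSP] at hbT
      rcases Finset.mem_union.mp hbT with hb | hb
      · exact absurd (Finset.mem_singleton.mp hb) hba
      · exact hb
  have hp1 := Finset.card_pos.mpr hP1
  have hp2 := Finset.card_pos.mpr hP2
  rcases (by omega : (D.plus T).card = 1 ∨ (D.minus T).card = 1) with h1 | h1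
  · exact main (D.plus T) (D.minus T) hPu hPd h1 (fun f hf => hmem f hf)
  · refine main (D.minus T) (D.plus T) ?_ hPd.symm h1 ?_
    · rw [Finset.union_comm]; exact hPu
    · intro f hf
      rw [hmem f hf, and_comm]
  where dummy := 0
end Aux2
section Aux3
variable {I : Type*} [DecidableEq I] {H : Set (Finset I)}

lemma two_edges (hH : IsCSS H) {D : NodalDatum H} {B : Set (Finset I)}
    (hB : IsSepBlock D B) (x y z : I) (hxy : x ≠ y) (hxz : x ≠ z) (hyz : y ≠ z)
    (hTH : ({x, y, z} : Finset I) ∈ H)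
    (hxyB : ({x, y} : Finset I) ∈ B) :
    (({x, z} : Finset I) ∈ B ↔ ({y, z} : Finset I) ∉ B) := by
  have hsubN : B ⊆ D.N := fun b hb => ((hB.1.2.1) hb).1
  have hstar := hB.2 hxyB
  have hxyT : ({x, y} : Finset I) ⊆ {x, y, z} := by
    intro t ht; simp at ht ⊢; tauto
  have hTN : ({x, y, z} : Finset I) ∈ D.N := hstar.2 _ hTH hxyT
  have hT3 : ({x, y, z} : Finset I).card = 3 := by
    rw [Finset.card_insert_of_notMem (by simp [hxy, hxz]),
      Finset.card_insert_of_notMem (by simp [hyz]), Finset.card_singleton]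
  obtain ⟨a, haT, hedge⟩ := exists_apex D _ hTN hT3
  have hxzT : ({x, z} : Finset I) ⊆ {x, y, z} := by
    intro t ht; simp at ht ⊢; tauto
  have hyzT : ({y, z} : Finset I) ⊆ {x, y, z} := by
    intro t ht; simp at ht ⊢; tauto
  have cxz : ({x, z} : Finset I).card = 2 := by
    rw [Finset.card_insert_of_notMem (by simp [hxz]), Finset.card_singleton]
  have cyz : ({y, z} : Finset I).card = 2 := by
    rw [Finset.card_insert_of_notMem (by simp [hyz]), Finset.card_singleton]
  have cxy : ({x, y} : Finset I).card = 2 := by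
    rw [Finset.card_insert_of_notMem (by simp [hxy]), Finset.card_singleton]
  have haxy : a ∈ ({x, y} : Finset I) := (hedge _ hxyT cxy).mp (hsubN hxyB)
  have hT3' : ({x, y, z} : Finset I) ∈ level H 3 := ⟨hTH, hT3⟩
  rcases Finset.mem_insert.mp haxy with hax | ha
  · -- a = x : {x,z} ∈ B, {y,z} ∉ B
    rw [hax] at hedge
    have hxzN : ({x, z} : Finset I) ∈ D.N := (hedge _ hxzT cxz).mpr (by simp)
    have hyzN : ({y, z} : Finset I) ∉ D.N := by
      rw [hedge _ hyzT cyz]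
      simp [hxy, hxz]
    have hu : ({x, y} : Finset I) ∪ {x, z} = {x, y, z} := by
      ext t; simp; try tauto
    have hxzB : ({x, z} : Finset I) ∈ B :=
      absorb hB hxyB hxzN ⟨hH.1 _ hTH _ hxzT, cxz⟩ (by rw [hu]; exact hT3')
    simp only [hxzB, true_iff]
    exact fun hb => hyzN (hsubN hb)
  · -- a = y : {y,z} ∈ B, {x,z} ∉ B
    rw [Finset.mem_singleton.mp ha] at hedge
    have hyzN : ({y, z} : Finset I) ∈ D.N := (hedge _ hyzT cyz).mpr (by simp)
    have hxzN : ({x, z} : Finset I) ∉ D.N := by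
      rw [hedge _ hxzT cxz]
      simp [Ne.symm hxy, hyz]
    have hu : ({x, y} : Finset I) ∪ {y, z} = {x, y, z} := by
      ext t; simp; try tauto
    have hyzB : ({y, z} : Finset I) ∈ B :=
      absorb hB hxyB hyzN ⟨hH.1 _ hTH _ hyzT, cyz⟩ (by rw [hu]; exact hT3')
    simp only [hyzB, not_true, iff_false]
    exact fun hb => hxzN (hsubN hb)

open Classical in
lemma triangle (hH : IsCSS H) {D : NodalDatum H} {B : Set (Finset I)}
    (hB : IsSepBlock D B) (i₁ i₂ i₃ : I)
    (h2p : IsKPath H 2 [{i₁, i₃}, {i₃, i₂}]) :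
    ((if ({i₁, i₂} : Finset I) ∈ B then 1 else 0) +
     (if ({i₁, i₃} : Finset I) ∈ B then 1 else 0) +
     (if ({i₃, i₂} : Finset I) ∈ B then 1 else 0)) % 2 = 0 := by
  obtain ⟨-, hlev, hch⟩ := h2p
  have hU : ({i₁, i₃} : Finset I) ∪ {i₃, i₂} ∈ level H 3 := by
    have := List.isChain_pair.mp hch
    exact this
  have hUeq : ({i₁, i₃} : Finset I) ∪ {i₃, i₂} = {i₁, i₂, i₃} := by
    ext t; simp; try tauto
  have hTH : ({i₁, i₂, i₃} : Finset I) ∈ H := by rw [← hUeq]; exact hU.1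
  have hT3 : ({i₁, i₂, i₃} : Finset I).card = 3 := by rw [← hUeq]; exact hU.2
  -- distinctness
  have h12 : i₁ ≠ i₂ := by
    intro h
    have hsub : ({i₁, i₂, i₃} : Finset I) ⊆ {i₁, i₃} := by
      intro t ht; simp [h] at ht ⊢; tauto
    have hle := Finset.card_le_card hsub
    have h2 : ({i₁, i₃} : Finset I).card ≤ 2 :=
      le_trans (Finset.card_insert_le _ _) (by simp)
    omega
  have h13 : i₁ ≠ i₃ := by
    intro h
    have hsub : ({i₁, i₂, i₃} : Finset I) ⊆ {i₂, i₃} := by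
      intro t ht; simp [h] at ht ⊢; tauto
    have hle := Finset.card_le_card hsub
    have h2 : ({i₂, i₃} : Finset I).card ≤ 2 :=
      le_trans (Finset.card_insert_le _ _) (by simp)
    omega
  have h32 : i₃ ≠ i₂ := by
    intro h
    have hsub : ({i₁, i₂, i₃} : Finset I) ⊆ {i₁, i₂} := by
      intro t ht; simp [h] at ht ⊢; tauto
    have hle := Finset.card_le_card hsub
    have h2 : ({i₁, i₂} : Finset I).card ≤ 2 :=
      le_trans (Finset.card_insert_le _ _) (by simp)
    omega
  by_cases b12 : ({i₁, i₂} : Finset I) ∈ B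
  · -- two_edges with x=i₁ y=i₂ z=i₃
    have h := two_edges hH hB i₁ i₂ i₃ h12 h13 (Ne.symm h32) hTH b12
    by_cases b13 : ({i₁, i₃} : Finset I) ∈ B
    · have : ({i₂, i₃} : Finset I) ∉ B := h.mp b13
      have e23 : ({i₃, i₂} : Finset I) = {i₂, i₃} := Finset.pair_comm _ _
      rw [e23]
      simp [b12, b13, this]
    · have : ({i₂, i₃} : Finset I) ∈ B := by
        by_contra hc
        exact b13 (h.mpr hc)
      have e23 : ({i₃, i₂} : Finset I) = {i₂, i₃} := Finset.pair_comm _ _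
      rw [e23]
      simp [b12, b13, this]
  · by_cases b13 : ({i₁, i₃} : Finset I) ∈ B
    · -- two_edges with x=i₁ y=i₃ z=i₂
      have hTH' : ({i₁, i₃, i₂} : Finset I) ∈ H := by
        rw [show ({i₁, i₃, i₂} : Finset I) = {i₁, i₂, i₃} by ext t; simp; try tauto]
        exact hTH
      have h := two_edges hH hB i₁ i₃ i₂ h13 h12 h32 hTH' b13
      have b23 : ({i₃, i₂} : Finset I) ∈ B := by
        by_contra hc
        rw [show ({i₁, i₂} : Finset I) ∈ B ↔ _ from h] at b12
        exact b12 hc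
      simp [b12, b13, b23]
    · by_cases b23 : ({i₃, i₂} : Finset I) ∈ B
      · -- two_edges with x=i₃ y=i₂ z=i₁
        have hTH' : ({i₃, i₂, i₁} : Finset I) ∈ H := by
          rw [show ({i₃, i₂, i₁} : Finset I) = {i₁, i₂, i₃} by ext t; simp; try tauto]
          exact hTH
        have h := two_edges hH hB i₃ i₂ i₁ h32 (Ne.symm h13) (Ne.symm h12) hTH' b23
        rw [show ({i₃, i₁} : Finset I) = {i₁, i₃} from Finset.pair_comm _ _,
          show ({i₂, i₁} : Finset I) = {i₁, i₂} from Finset.pair_comm _ _] at h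
        exact absurd (h.mpr b12) b13
      · simp [b12, b13, b23]
end Aux3
section Aux4
variable {I : Type*} [DecidableEq I] {H : Set (Finset I)}

open Classical in
lemma kappa_one (B : Set (Finset I)) (a : Finset I) : kappa B [a] = 0 := by
  simp [kappa, subSup]

open Classical in
lemma kappa_homotopy (hH : IsCSS H) {D : NodalDatum H} {B : Set (Finset I)}
    (hB : IsSepBlock D B) {γ₁ γ₂ : List (Finset I)}
    (h : ElemHomotopy H γ₁ γ₂) : kappa B γ₁ % 2 = kappa B γ₂ % 2 := by
  obtain ⟨δ, ε₁, ε₂, ρ, hpair, rfl, rfl⟩ := h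
  have key : ∀ ε ε' : List (Finset I), ElemPairCore H ε ε' →
      kappa B (δ ++ ε ++ ρ) % 2 = kappa B (δ ++ ε' ++ ρ) % 2 := by
    intro ε ε' hp
    rcases hp with rfl | ⟨i₁, i₂, rfl, rfl⟩ | ⟨i₁, i₂, i₃, rfl, rfl, h2p⟩
    · rfl
    · have hrep := kappa_replace B δ [{i₁}, {i₂}, {i₁}] [{i₁}] ρ
        (by simp) (by simp) (by simp) (by simp [List.getLast?])
      have k1 : kappa B [({i₁} : Finset I), {i₂}, {i₁}] % 2 = 0 := by
        rw [kappa_cons_cons, kappa_cons_cons, kappa_one,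
          Finset.union_comm ({i₂} : Finset I) {i₁}]
        by_cases hm : ({i₁, i₂} : Finset I) ∈ B <;> simp [hm]
      have k2 : kappa B [({i₁} : Finset I)] = 0 := kappa_one B _
      omega
    · have tri := triangle hH hB i₁ i₂ i₃ h2p
      have hrep := kappa_replace B δ [{i₁}, {i₂}] [{i₁}, {i₃}, {i₂}] ρ
        (by simp) (by simp) (by simp) (by simp [List.getLast?])
      have k1 : kappa B [({i₁} : Finset I), {i₂}] =
          (if ({i₁, i₂} : Finset I) ∈ B then 1 else 0) := by
        have e : ({i₁} : Finset I) ∪ {i₂} = {i₁, i₂} := by ext t; simp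
        rw [kappa_cons_cons, kappa_one, e]
        omega
      have k2 : kappa B [({i₁} : Finset I), {i₃}, {i₂}] =
          (if ({i₁, i₃} : Finset I) ∈ B then 1 else 0) +
          (if ({i₃, i₂} : Finset I) ∈ B then 1 else 0) := by
        have e1 : ({i₁} : Finset I) ∪ {i₃} = {i₁, i₃} := by ext t; simp
        have e2 : ({i₃} : Finset I) ∪ {i₂} = {i₃, i₂} := by ext t; simp
        rw [kappa_cons_cons, kappa_cons_cons, kappa_one, e1, e2]
        omega
      rw [k1, k2] at hrep
      omega
  rcases hpair with hp | hp
  · exact key _ _ hp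
  · exact (key _ _ hp).symm
end Aux4

/-- In a simply connected combinatorial strata structure, for a nodal
separating block `B`, any two 1-paths joining the same strata `{i}` and `{j}` cross `B`
a number of times of the same parity; in particular `A_B(i) ∩ B_B(i) = ∅` for all `i`. -/
theorem parity_of_crossings
    {I : Type*} [Fintype I] [DecidableEq I] (H : Set (Finset I))
    (hH : IsCSS H) (hsc : SimplyConnected H)
    (D : NodalDatum H) (B : Set (Finset I)) (hB : IsSepBlock D B) :
    (∀ (i j : I) (γ γ' : List (Finset I)),
        IsKPath H 1 γ → IsKPath H 1 γ' →
        Joins γ ({i} : Finset I) ({j} : Finset I) →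
        Joins γ' ({i} : Finset I) ({j} : Finset I) →
        Even ((kappa B γ : ℤ) - (kappa B γ' : ℤ))) ∧
    ∀ i : I, ABset H B i ∩ BBset H B i = ∅ := by
  have main : ∀ (i j : I) (γ γ' : List (Finset I)),
      IsKPath H 1 γ → IsKPath H 1 γ' →
      Joins γ ({i} : Finset I) ({j} : Finset I) →
      Joins γ' ({i} : Finset I) ({j} : Finset I) →
      Even ((kappa B γ : ℤ) - (kappa B γ' : ℤ)) := by
    intro i j γ γ' hγ hγ' hjγ hjγ'
    have hhom := hsc.2 γ γ' hγ hγ' hγ.2.1 hγ'.2.1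
      (by rw [hjγ.1, hjγ'.1]) (by rw [hjγ.2, hjγ'.2])
    obtain ⟨-, hrel⟩ := hhom
    have hpar : kappa B γ % 2 = kappa B γ' % 2 := by
      clear hγ' hjγ'
      induction hrel with
      | refl => rfl
      | tail _ step ih => exact ih.trans (kappa_homotopy hH hB step.1)
    rw [Int.even_sub]
    rw [Int.even_coe_nat, Int.even_coe_nat, Nat.even_iff, Nat.even_iff, hpar]
  refine ⟨main, ?_⟩
  intro i
  ext J
  simp only [Set.mem_inter_iff, Set.mem_empty_iff_false, iff_false]
  rintro ⟨⟨hJ1, γ, hγ, hjoin, heven⟩, ⟨-, γ', hγ', hjoin', hodd⟩⟩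
  obtain ⟨j, rfl⟩ := Finset.card_eq_one.mp hJ1.2
  have hev := main i j γ γ' hγ hγ' hjoin hjoin'
  rw [Int.even_sub, Int.even_coe_nat, Int.even_coe_nat] at hev
  rw [Nat.even_iff] at heven
  rw [Nat.odd_iff] at hodd
  rw [Nat.even_iff, Nat.even_iff] at hev
  omega
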